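/- Let 1 ≤ r ≤ k ≤ n and let M(r) = {σ ∈ S_n : |support(σ) ∩ [k]| = r}. If λ is a real eigenvalue of the adjacency matrix of the arrangement graph A(n,k,r), then (n−k)!·λ is a real eigenvalue of the adjacency matrix of the Cayley graph Γ(S_n, M(r)). -/

import Mathlib

open Finset Equiv Matrix

/-- restriction of the inverse of a permutation to the first `k` points. -/
noncomputable def stmt18phi {n k : ℕ} (hkn : k ≤ n) (τ : Equiv.Perm (Fin n)) :
    Fin k ↪ Fin n :=
  ⟨fun i => τ⁻¹ (Fin.castLE hkn i), fun i j h => by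
    have := τ⁻¹.injective h
    exact Fin.castLE_injective hkn this⟩

lemma stmt18phi_apply {n k : ℕ} (hkn : k ≤ n) (τ : Equiv.Perm (Fin n)) (i : Fin k) :
    stmt18phi hkn τ i = τ⁻¹ (Fin.castLE hkn i) := rfl

/-- every embedding extends to a permutation (in the `stmt18phi` sense). -/
lemma stmt18phi_surj {n k : ℕ} (hkn : k ≤ n) (q : Fin k ↪ Fin n) :
    ∃ τ : Equiv.Perm (Fin n), stmt18phi hkn τ = q := by
  classical
  set ι : Fin k ↪ Fin n := Fin.castLEEmb hkn with hι
  have hcard : Fintype.card {x : Fin n // x ∈ Set.range ⇑ι} =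
      Fintype.card {x : Fin n // x ∈ Set.range ⇑q} := by
    rw [Fintype.card_congr ι.toEquivRange.symm, Fintype.card_congr q.toEquivRange.symm]
  have hcompl : Fintype.card {x : Fin n // x ∉ Set.range ⇑ι} =
      Fintype.card {x : Fin n // x ∉ Set.range ⇑q} := by
    have h1 := Fintype.card_subtype_compl (fun x : Fin n => x ∈ Set.range ⇑ι)
    have h2 := Fintype.card_subtype_compl (fun x : Fin n => x ∈ Set.range ⇑q)
    rw [h1, h2, hcard]
  let eR : {x : Fin n // x ∈ Set.range ⇑ι} ≃ {x : Fin n // x ∈ Set.range ⇑q} :=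
    ι.toEquivRange.symm.trans q.toEquivRange
  let eC : {x : Fin n // x ∉ Set.range ⇑ι} ≃ {x : Fin n // x ∉ Set.range ⇑q} :=
    Fintype.equivOfCardEq hcompl
  let π : Equiv.Perm (Fin n) :=
    ((Equiv.sumCompl (· ∈ Set.range ⇑ι)).symm.trans
      ((eR.sumCongr eC).trans (Equiv.sumCompl (· ∈ Set.range ⇑q))))
  have hπ : ∀ i : Fin k, π (Fin.castLE hkn i) = q i := by
    intro i
    have hmem : (Fin.castLE hkn i : Fin n) ∈ Set.range ⇑ι := ⟨i, rfl⟩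
    have h1 : (Equiv.sumCompl (· ∈ Set.range ⇑ι)).symm (Fin.castLE hkn i) =
        Sum.inl ⟨Fin.castLE hkn i, hmem⟩ :=
      Equiv.sumCompl_symm_apply_of_pos hmem
    have h2 : eR ⟨Fin.castLE hkn i, hmem⟩ = ⟨q i, ⟨i, rfl⟩⟩ := by
      have h3 : (⟨Fin.castLE hkn i, hmem⟩ : {x : Fin n // x ∈ Set.range ⇑ι}) =
          ι.toEquivRange i := rfl
      simp only [eR, Equiv.trans_apply, h3, Equiv.symm_apply_apply]
      rfl
    simp only [π, Equiv.trans_apply, h1, Equiv.sumCongr_apply, Sum.map_inl, h2,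
      Equiv.sumCompl_apply_inl]
  refine ⟨π⁻¹, ?_⟩
  ext i
  simp [stmt18phi, hπ i]

/-- number of permutations fixing each of the first `k` points pointwise. -/
lemma stmt18_card_fix {n k : ℕ} (hkn : k ≤ n) :
    Fintype.card {ρ : Equiv.Perm (Fin n) // ∀ a : Fin n, (a : ℕ) < k → ρ a = a} =
      (n - k).factorial := by
  classical
  have e1 : {ρ : Equiv.Perm (Fin n) // ∀ a : Fin n, (a : ℕ) < k → ρ a = a} ≃
      {ρ : Equiv.Perm (Fin n) // ∀ a : Fin n, ¬ (k ≤ (a : ℕ)) → ρ a = a} :=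
    Equiv.subtypeEquivRight fun ρ => by
      constructor
      · intro h a ha; exact h a (not_le.mp ha)
      · intro h a ha; exact h a (not_le.mpr ha)
  have e2 := (Equiv.Perm.subtypeEquivSubtypePerm (fun a : Fin n => k ≤ (a : ℕ))).symm
  rw [Fintype.card_congr (e1.trans e2), Fintype.card_perm]
  congr 1
  have hlt : Fintype.card {a : Fin n // (a : ℕ) < k} = k := by
    have e : {a : Fin n // (a : ℕ) < k} ≃ Fin k :=
      { toFun := fun a => ⟨(a : Fin n).1, a.2⟩
        invFun := fun i => ⟨Fin.castLE hkn i, i.2⟩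
        left_inv := fun a => by ext; rfl
        right_inv := fun i => by ext; rfl }
    rw [Fintype.card_congr e, Fintype.card_fin]
  have hc := Fintype.card_subtype_compl (fun a : Fin n => (a : ℕ) < k)
  have hcongr : Fintype.card {a : Fin n // k ≤ (a : ℕ)} =
      Fintype.card {a : Fin n // ¬ (a : ℕ) < k} :=
    Fintype.card_congr (Equiv.subtypeEquivRight fun a => not_lt.symm)
  rw [hcongr, hc, hlt, Fintype.card_fin]

/-- cardinality of the fiber of `stmt18phi` over any embedding. -/
lemma stmt18_fiber_card {n k : ℕ} (hkn : k ≤ n) (q : Fin k ↪ Fin n) :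
    (Finset.univ.filter fun τ : Equiv.Perm (Fin n) => stmt18phi hkn τ = q).card =
      (n - k).factorial := by
  classical
  obtain ⟨τ₀, hτ₀⟩ := stmt18phi_surj hkn q
  have hτ₀' : ∀ i : Fin k, τ₀⁻¹ (Fin.castLE hkn i) = q i := by
    intro i; rw [← hτ₀]; rfl
  have key : ∀ τ : Equiv.Perm (Fin n), stmt18phi hkn τ = q ↔
      ∀ a : Fin n, (a : ℕ) < k → (τ * τ₀⁻¹) a = a := by
    intro τ
    constructor
    · intro h a ha
      have hi : (Fin.castLE hkn ⟨(a : ℕ), ha⟩ : Fin n) = a := by ext; rfl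
      have h1 : τ⁻¹ a = q ⟨(a : ℕ), ha⟩ := by
        rw [← h]; simp [stmt18phi_apply, hi]
      have h2 : τ₀⁻¹ a = q ⟨(a : ℕ), ha⟩ := by rw [← hτ₀' ⟨(a : ℕ), ha⟩, hi]
      have h3 : τ₀⁻¹ a = τ⁻¹ a := by rw [h1, h2]
      simp [Equiv.Perm.mul_apply, h3]
    · intro h
      ext i
      have ha : ((Fin.castLE hkn i : Fin n) : ℕ) < k := i.2
      have h2 : τ (τ₀⁻¹ (Fin.castLE hkn i)) = Fin.castLE hkn i := h (Fin.castLE hkn i) ha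
      have h3 : τ₀⁻¹ (Fin.castLE hkn i) = τ⁻¹ (Fin.castLE hkn i) := by
        apply τ.injective; rw [h2]; simp
      rw [stmt18phi_apply, ← h3, hτ₀' i]
  have ecard : (Finset.univ.filter fun τ : Equiv.Perm (Fin n) => stmt18phi hkn τ = q).card =
      Fintype.card {ρ : Equiv.Perm (Fin n) // ∀ a : Fin n, (a : ℕ) < k → ρ a = a} := by
    rw [← Fintype.card_subtype]
    refine Fintype.card_congr ⟨fun τ => ⟨τ.1 * τ₀⁻¹, (key τ.1).mp τ.2⟩,
      fun ρ => ⟨ρ.1 * τ₀, (key _).mpr ?_⟩, fun τ => ?_, fun ρ => ?_⟩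
    · intro a ha
      have h4 : ρ.1 * τ₀ * τ₀⁻¹ = ρ.1 := by group
      rw [h4]; exact ρ.2 a ha
    · ext : 1; simp [mul_assoc]
    · ext : 1; simp [mul_assoc]
  rw [ecard, stmt18_card_fix hkn]

theorem stmt_18 {n k r : ℕ} (hr : 1 ≤ r) (hrk : r ≤ k) (hkn : k ≤ n)
    (A : SimpleGraph (Fin k ↪ Fin n)) [DecidableRel A.Adj]
    (hA : ∀ p q : Fin k ↪ Fin n, A.Adj p q ↔
      (Finset.univ.filter fun i : Fin k => p i ≠ q i).card = r)
    (Γ : SimpleGraph (Equiv.Perm (Fin n))) [DecidableRel Γ.Adj]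
    (hΓ : ∀ u v : Equiv.Perm (Fin n), Γ.Adj u v ↔
      ((v * u⁻¹).support.filter fun i : Fin n => (i : ℕ) < k).card = r) :
    ∀ μ : ℝ, μ ∈ spectrum ℝ (A.adjMatrix ℝ) →
      ((n - k).factorial : ℝ) * μ ∈ spectrum ℝ (Γ.adjMatrix ℝ) := by
  classical
  intro μ hμ
  rw [← AlgEquiv.spectrum_eq (Matrix.toLinAlgEquiv' :
      Matrix (Fin k ↪ Fin n) (Fin k ↪ Fin n) ℝ ≃ₐ[ℝ] _),
    ← Module.End.hasEigenvalue_iff_mem_spectrum] at hμ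
  rw [← AlgEquiv.spectrum_eq (Matrix.toLinAlgEquiv' :
      Matrix (Equiv.Perm (Fin n)) (Equiv.Perm (Fin n)) ℝ ≃ₐ[ℝ] _),
    ← Module.End.hasEigenvalue_iff_mem_spectrum]
  obtain ⟨f, hf⟩ := hμ.exists_hasEigenvector
  have hf0 : f ≠ 0 := hf.right
  have hfe : (A.adjMatrix ℝ) *ᵥ f = μ • f := by
    have h := hf.apply_eq_smul
    rwa [Matrix.toLinAlgEquiv'_apply] at h
  -- adjacency correspondence
  have adj_corr : ∀ σ τ : Equiv.Perm (Fin n),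
      Γ.Adj σ τ ↔ A.Adj (stmt18phi hkn σ) (stmt18phi hkn τ) := by
    intro σ τ
    rw [hΓ, hA]
    have hcard : ((τ * σ⁻¹).support.filter fun j : Fin n => (j : ℕ) < k).card =
        (Finset.univ.filter fun i : Fin k =>
          stmt18phi hkn σ i ≠ stmt18phi hkn τ i).card := by
      refine Finset.card_bij' (fun j hj => (⟨(j : ℕ),
          (Finset.mem_filter.mp hj).2⟩ : Fin k))
        (fun i _ => Fin.castLE hkn i) ?_ ?_ ?_ ?_
      · intro j hj
        obtain ⟨hjs, hjk⟩ := Finset.mem_filter.mp hj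
        rw [Equiv.Perm.mem_support] at hjs
        have hjs' : τ (σ⁻¹ j) ≠ j := hjs
        have hcast : (Fin.castLE hkn ⟨(j : ℕ), hjk⟩ : Fin n) = j := by ext; rfl
        rw [Finset.mem_filter]
        refine ⟨Finset.mem_univ _, ?_⟩
        simp only [stmt18phi_apply, hcast]
        intro hcontra
        apply hjs'
        rw [hcontra]; simp
      · intro i hi
        obtain ⟨-, hne⟩ := Finset.mem_filter.mp hi
        simp only [stmt18phi_apply] at hne
        rw [Finset.mem_filter]
        constructor
        · rw [Equiv.Perm.mem_support]
          intro hcontra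
          apply hne
          have hc : τ (σ⁻¹ (Fin.castLE hkn i)) = Fin.castLE hkn i := hcontra
          have := congrArg (⇑τ⁻¹) hc
          simpa using this
        · exact i.2
      · intro j hj; ext; rfl
      · intro i hi; ext; rfl
    rw [hcard]
  -- the lifted function
  set g : Equiv.Perm (Fin n) → ℝ := fun τ => f (stmt18phi hkn τ) with hg
  have hg0 : g ≠ 0 := by
    intro hcontra
    apply hf0
    ext q
    obtain ⟨τ, hτ⟩ := stmt18phi_surj hkn q
    have := congrFun hcontra τ
    simpa [hg, hτ] using this
  have hmain : (Γ.adjMatrix ℝ) *ᵥ g = (((n - k).factorial : ℝ) * μ) • g := by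
    funext σ
    rw [Matrix.mulVec, Pi.smul_apply]
    show (Γ.adjMatrix ℝ *ᵥ g) σ = _
    rw [SimpleGraph.adjMatrix_mulVec_apply]
    have hN : Γ.neighborFinset σ = Finset.univ.filter fun τ => Γ.Adj σ τ := by
      ext τ; simp [SimpleGraph.mem_neighborFinset, SimpleGraph.adj_comm]
    rw [hN]
    have hsum : ∑ τ ∈ Finset.univ.filter (fun τ => Γ.Adj σ τ), g τ =
        ∑ q : Fin k ↪ Fin n, ∑ τ ∈ (Finset.univ.filter (fun τ => Γ.Adj σ τ)).filter
          (fun τ => stmt18phi hkn τ = q), f q := by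
      rw [Finset.sum_fiberwise_of_maps_to' (fun τ _ => Finset.mem_univ _)]
    rw [hsum]
    have hfib : ∀ q : Fin k ↪ Fin n,
        ((Finset.univ.filter (fun τ => Γ.Adj σ τ)).filter
          (fun τ => stmt18phi hkn τ = q)).card =
        if A.Adj (stmt18phi hkn σ) q then (n - k).factorial else 0 := by
      intro q
      by_cases hq : A.Adj (stmt18phi hkn σ) q
      · rw [if_pos hq, ← stmt18_fiber_card hkn q]
        congr 1
        ext τ
        simp only [Finset.mem_filter, Finset.mem_univ, true_and]
        constructor
        · rintro ⟨-, h2⟩; exact h2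
        · intro h2
          exact ⟨(adj_corr σ τ).mpr (h2 ▸ hq), h2⟩
      · rw [if_neg hq, Finset.card_eq_zero]
        ext τ
        simp only [Finset.mem_filter, Finset.mem_univ, true_and, Finset.notMem_empty,
          iff_false, not_and]
        intro h1 h2
        exact hq (h2 ▸ (adj_corr σ τ).mp h1)
    have hsum2 : ∀ q : Fin k ↪ Fin n,
        ∑ τ ∈ (Finset.univ.filter (fun τ => Γ.Adj σ τ)).filter
          (fun τ => stmt18phi hkn τ = q), f q =
        if A.Adj (stmt18phi hkn σ) q then ((n - k).factorial : ℝ) * f q else 0 := by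
      intro q
      rw [Finset.sum_const, nsmul_eq_mul, hfib q]
      by_cases hq : A.Adj (stmt18phi hkn σ) q <;> simp [hq]
    rw [Finset.sum_congr rfl fun q _ => hsum2 q]
    have h5 : ∑ q : Fin k ↪ Fin n,
        (if A.Adj (stmt18phi hkn σ) q then ((n - k).factorial : ℝ) * f q else 0) =
        ((n - k).factorial : ℝ) * ∑ q ∈ A.neighborFinset (stmt18phi hkn σ), f q := by
      rw [← Finset.sum_filter, Finset.mul_sum]
      refine Finset.sum_congr ?_ fun q _ => rfl
      ext q; simp [SimpleGraph.mem_neighborFinset]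
    rw [h5, ← SimpleGraph.adjMatrix_mulVec_apply, hfe]
    simp [hg, mul_assoc]
  have hev : Module.End.HasEigenvector (Matrix.toLinAlgEquiv' (Γ.adjMatrix ℝ))
      (((n - k).factorial : ℝ) * μ) g := by
    constructor
    · rw [Module.End.mem_eigenspace_iff, Matrix.toLinAlgEquiv'_apply, hmain]
    · exact hg0
  exact Module.End.hasEigenvalue_of_hasEigenvector hev
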